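/- Let B = (B,+) be an abelian group, C = (C,·) a group, and φ, ψ : C → Aut(B) group homomorphisms satisfying φ_c ψ_{c'} = ψ_{c'} φ_c for all c, c' ∈ C. Define on B × C the operations (b_1,c_1) + (b_2,c_2) = (b_1 + φ_{c_1}(b_2), c_1c_2) and (φ_{c_1}(b_1), c_1) ∘ (φ_{c_2}(b_2), c_2) = (φ_{c_1c_2}(b_1 + ψ_{c_1}(b_2)), c_1c_2), so that (B × C, +, ∘) is a skew brace. Then (B × C, +, ∘) is λ-homomorphic if and only if (φ_c − id_B)(φ_{c'} − id_B) = 0 and (φ_c − id_B)(ψ_{c'} − id_B) = 0 hold for all c, c' ∈ C, where products and differences of automorphisms are taken in the endomorphism ring of the abelian group B. -/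

import Mathlib

set_option maxHeartbeats 1000000


variable {B C : Type*} [AddCommGroup B] [Group C]

/-- The multiplicative group structure that `AddAut A` carried in older Mathlib
(`e₁ * e₂ = e₂.trans e₁`, `1 = refl`, `e⁻¹ = e.symm`). -/
instance addAutGroupOld (A : Type*) [Add A] : Group (AddAut A) where
  mul g h := AddEquiv.trans h g
  one := AddEquiv.refl _
  inv := AddEquiv.symm
  mul_assoc _ _ _ := rfl
  one_mul _ := rfl
  mul_one _ := rfl
  inv_mul_cancel := AddEquiv.self_trans_symm

theorem addAutOld_mul_apply {A : Type*} [Add A] (e₁ e₂ : AddAut A) (a : A) :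
    (e₁ * e₂) a = e₁ (e₂ a) := rfl

theorem addAutOld_one_apply {A : Type*} [Add A] (a : A) : (1 : AddAut A) a = a := rfl

/-- The addition `(b₁,c₁) + (b₂,c₂) = (b₁ + φ_{c₁}(b₂), c₁c₂)` on `B × C`. -/
def sbAdd (φ : C →* AddAut B) : B × C → B × C → B × C :=
  fun p q => (p.1 + φ p.2 q.1, p.2 * q.2)

/-- Negation for `sbAdd`: `-(b,c) = (φ_{c⁻¹}(-b), c⁻¹)`. -/
def sbNeg (φ : C →* AddAut B) : B × C → B × C :=
  fun p => (φ p.2⁻¹ (-p.1), p.2⁻¹)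

/-- The multiplication on `B × C` determined by
`(φ_{c₁}(b₁), c₁) ∘ (φ_{c₂}(b₂), c₂) = (φ_{c₁c₂}(b₁ + ψ_{c₁}(b₂)), c₁c₂)`. -/
def sbMul (φ ψ : C →* AddAut B) : B × C → B × C → B × C :=
  fun p q =>
    (φ (p.2 * q.2) ((φ p.2).symm p.1 + ψ p.2 ((φ q.2).symm q.1)), p.2 * q.2)

/-- Inversion for `sbMul`: the `∘`-inverse of `(φ_c(b), c)` is
`(φ_{c⁻¹}(ψ_{c⁻¹}(-b)), c⁻¹)`. -/
def sbInv (φ ψ : C →* AddAut B) : B × C → B × C :=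
  fun p => (φ p.2⁻¹ (ψ p.2⁻¹ (-((φ p.2).symm p.1))), p.2⁻¹)

/-- The lambda map of the skew brace `(B × C, +, ∘)`:
`λ_a(x) = -a + a ∘ x`. -/
def sbLam (φ ψ : C →* AddAut B) (a x : B × C) : B × C :=
  sbAdd φ (sbNeg φ a) (sbMul φ ψ a x)

/-- **Theorem 3.2(c)**: given `φ_c ψ_{c'} = ψ_{c'} φ_c`, so that
`(B × C, +, ∘)` is a skew brace, it is λ-homomorphic
(`λ_{a+b} = λ_a λ_b`) if and only if `(φ_c - id)(φ_{c'} - id) = 0` and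
`(φ_c - id)(ψ_{c'} - id) = 0` for all `c, c' ∈ C`. -/
theorem first_construction_lambda_homomorphic_iff (φ ψ : C →* AddAut B)
    (hcomm : ∀ (c c' : C) (b : B), φ c (ψ c' b) = ψ c' (φ c b)) :
    (∀ a b x : B × C, sbLam φ ψ (sbAdd φ a b) x = sbLam φ ψ a (sbLam φ ψ b x)) ↔
    ((∀ (c c' : C) (b : B), φ c (φ c' b - b) - (φ c' b - b) = 0) ∧
      (∀ (c c' : C) (b : B), φ c (ψ c' b - b) - (ψ c' b - b) = 0)) := by

  have hsymm : ∀ (d : C) (z : B), (φ d).symm z = φ d⁻¹ z := by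
    intro d z; rw [map_inv]; rfl
  have hcan1 : ∀ (d : C) (z : B), φ d (φ d⁻¹ z) = z := by
    intro d z; rw [map_inv]; exact (φ d).apply_symm_apply z
  have hcan2 : ∀ (d : C) (z : B), φ d⁻¹ (φ d z) = z := by
    intro d z; rw [map_inv]; exact (φ d).symm_apply_apply z
  have hone : (AddEquiv.symm (1 : AddAut B)) = 1 := rfl
  constructor
  · intro H
    constructor
    · intro c c' b
      have h := H (b, 1) (0, c'⁻¹) (0, c)
      simp only [sbLam, sbAdd, sbNeg, sbMul, Prod.ext_iff, hsymm, hone, mul_inv_rev, inv_inv,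
        inv_one, one_mul, mul_one, map_mul, map_one, addAutOld_mul_apply, addAutOld_one_apply,
        hcan1, hcan2, map_add, map_neg, map_zero, neg_zero, add_zero, zero_add, and_true] at h
      have key : φ c (φ c' b - b) - (φ c' b - b)
          = (-(φ c') b + (φ c) ((φ c') b)) - (-b + (φ c) b) := by
        rw [map_sub]; abel
      rw [key, h, sub_self]
    · intro c c' b
      have h := H (0, c') (φ c b, 1) (0, c)
      simp only [sbLam, sbAdd, sbNeg, sbMul, Prod.ext_iff, hsymm, hone, mul_inv_rev, inv_inv,
        inv_one, one_mul, mul_one, map_mul, map_one, addAutOld_mul_apply, addAutOld_one_apply,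
        hcan1, hcan2, map_add, map_neg, map_zero, neg_zero, add_zero, zero_add, and_true] at h
      have h' := congrArg (φ c⁻¹) h
      simp only [map_add, map_neg, hcan2] at h'
      have key : φ c (ψ c' b - b) - (ψ c' b - b)
          = (-(ψ c') b + ψ c' (φ c b)) - (-b + φ c b) := by
        rw [map_sub, hcomm]; abel
      rw [key, ← h', sub_self]
  · rintro ⟨h1, h2⟩ a b x
    have r1 : ∀ (c c' : C) (u : B), φ c (φ c' u) = φ c u + φ c' u - u := by
      intro c c' u
      have h := h1 c c' u
      rw [map_sub, sub_sub, sub_eq_zero] at h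
      rw [h]; abel
    have r2 : ∀ (c c' : C) (u : B), φ c (ψ c' u) = φ c u + ψ c' u - u := by
      intro c c' u
      have h := h2 c c' u
      rw [map_sub, sub_sub, sub_eq_zero] at h
      rw [h]; abel
    have r3 : ∀ (c c' : C) (u : B), ψ c' (φ c u) = φ c u + ψ c' u - u := by
      intro c c' u; rw [← hcomm, r2]
    have r4 : ∀ (c : C) (u : B), φ c⁻¹ u = 2 • u - φ c u := by
      intro c u
      have h := (r1 c c⁻¹ u).symm
      rw [hcan1, sub_eq_iff_eq_add] at h
      rw [two_smul, ← h]; abel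
    obtain ⟨a1, a2⟩ := a; obtain ⟨b1, b2⟩ := b; obtain ⟨x1, x2⟩ := x
    refine Prod.ext ?_ (by simp [sbLam, sbAdd, sbNeg, sbMul, mul_assoc])
    simp only [sbLam, sbAdd, sbNeg, sbMul, hsymm]
    simp only [mul_inv_rev, map_mul, addAutOld_mul_apply, map_add, map_neg, map_sub, hcan1, hcan2]
    simp only [r1, r2, r3, r4, map_add, map_neg, map_sub, map_nsmul, map_zsmul, hcan1, hcan2]
    abel
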